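/- Let G be a bipartite graph with bipartition (A,B) and minimum degree at least 3, admitting a 3-dimensional consistent separating representation {<_1,<_2,<_3} that is A-homogeneous with signs a_1=a_2=a_3=1. Then a contradiction follows; i.e., no such graph exists. (Equivalently: if a bipartite graph has a consistent separating representation with three orderings that all agree with each vertex's neighbourhood ordering, then some vertex of A or B has degree at most 2.) -/
import Mathlib


/-- Disjoint edges `vw` and `xy` are separated in the ordering given by an injective
function `f` if all endpoints of one precede all endpoints of the other. -/
def Separates {V : Type*} (f : V → ℕ) (v w x y : V) : Prop :=
  (f v < f x ∧ f v < f y ∧ f w < f x ∧ f w < f y) ∨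
  (f x < f v ∧ f x < f w ∧ f y < f v ∧ f y < f w)

/-- `f` is a separating representation of `G`: a family of linear orderings of `V(G)`
(injective functions to `ℕ`) such that every pair of disjoint edges is separated in
some ordering. -/
def IsSepRep {V : Type*} (G : SimpleGraph V) {k : ℕ} (f : Fin k → V → ℕ) : Prop :=
  (∀ i, Function.Injective (f i)) ∧
  ∀ ⦃v w x y : V⦄, G.Adj v w → G.Adj x y → v ≠ x → v ≠ y → w ≠ x → w ≠ y →
    ∃ i, Separates (f i) v w x y

/-- `f` is a strongly separating representation of `G`: separating, and in addition for
every edge `vw` and vertex `x ∉ {v,w}` some ordering has `x` before both `v,w` and some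
ordering has `x` after both `v,w`. -/
def IsStrongSepRep {V : Type*} (G : SimpleGraph V) {k : ℕ} (f : Fin k → V → ℕ) : Prop :=
  IsSepRep G f ∧
  ∀ ⦃v w x : V⦄, G.Adj v w → x ≠ v → x ≠ w →
    (∃ i, f i x < f i v ∧ f i x < f i w) ∧ (∃ j, f j v < f j x ∧ f j w < f j x)

/-- The separation dimension of `G`: the minimum size of a (nonempty) separating
representation of `G`. -/
noncomputable def sepDim {V : Type*} (G : SimpleGraph V) : ℕ :=
  sInf {k | 1 ≤ k ∧ ∃ f : Fin k → V → ℕ, IsSepRep G f}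

/-- The strong separation dimension of `G`: the minimum size of a (nonempty) strongly
separating representation of `G`. -/
noncomputable def strongSepDim {V : Type*} (G : SimpleGraph V) : ℕ :=
  sInf {k | 1 ≤ k ∧ ∃ f : Fin k → V → ℕ, IsStrongSepRep G f}

/-- No bipartite graph with bipartition `(A, B)` and minimum degree at least 3 admits a
3-dimensional consistent separating representation that is `A`-homogeneous with all three
signs `+1` (i.e. all three orderings restrict to the same order on each neighbourhood
`N(v)`, `v ∈ A`). -/
theorem no_homogeneous_all_positive {V : Type*} [Fintype V] [Nonempty V] [DecidableEq V]
    (G : SimpleGraph V) [DecidableRel G.Adj] (A B : Set V)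
    (hdisj : Disjoint A B) (hcover : A ∪ B = Set.univ)
    (hbip : ∀ v w : V, G.Adj v w → (v ∈ A ∧ w ∈ B) ∨ (v ∈ B ∧ w ∈ A))
    (hmindeg : ∀ v, 3 ≤ G.degree v)
    (f : Fin 3 → V → ℕ) (hrep : IsSepRep G f)
    (hcons : ∀ v w : V, G.Adj v w → v ∈ A → w ∈ B → ∀ i, f i v < f i w)
    (hhomog : ∀ v ∈ A, ∀ (i : Fin 3) (w x : V), G.Adj v w → G.Adj v x →
      (f i w < f i x ↔ f 0 w < f 0 x)) :
    False := by
  -- find a vertex v in A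
  obtain ⟨u⟩ := ‹Nonempty V›
  have hupos : 0 < G.degree u := lt_of_lt_of_le (by norm_num) (hmindeg u)
  obtain ⟨w0, hw0⟩ : ∃ w, G.Adj u w := by
    rw [← SimpleGraph.card_neighborFinset_eq_degree] at hupos
    obtain ⟨w, hw⟩ := Finset.card_pos.mp hupos
    exact ⟨w, (SimpleGraph.mem_neighborFinset ..).mp hw⟩
  obtain ⟨v, hvA⟩ : ∃ v, v ∈ A := by
    rcases hbip u w0 hw0 with ⟨h1, _⟩ | ⟨_, h2⟩
    · exact ⟨u, h1⟩
    · exact ⟨w0, h2⟩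
  -- two distinct neighbours of v
  have hcard : 2 ≤ (G.neighborFinset v).card := le_trans (by norm_num) (hmindeg v)
  obtain ⟨b0, hb0, c0, hc0, hbc0⟩ := Finset.one_lt_card.mp hcard
  rw [SimpleGraph.mem_neighborFinset] at hb0 hc0
  have hne0 : f 0 b0 ≠ f 0 c0 := fun h => hbc0 (hrep.1 0 h)
  -- order them so that f 0 b < f 0 c
  obtain ⟨b, c, hvb, hvc, hbc⟩ : ∃ b c, G.Adj v b ∧ G.Adj v c ∧ f 0 b < f 0 c := by
    rcases lt_or_gt_of_ne hne0 with h | h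
    · exact ⟨b0, c0, hb0, hc0, h⟩
    · exact ⟨c0, b0, hc0, hb0, h⟩
  have hAB : ∀ {a : V}, a ∈ A → a ∉ B := fun ha => Set.disjoint_left.mp hdisj ha
  have hbB : b ∈ B := by
    rcases hbip v b hvb with ⟨_, h⟩ | ⟨h, _⟩
    · exact h
    · exact absurd h (hAB hvA)
  have hcB : c ∈ B := by
    rcases hbip v c hvc with ⟨_, h⟩ | ⟨h, _⟩
    · exact h
    · exact absurd h (hAB hvA)
  have hibc : ∀ i, f i b < f i c := fun i => (hhomog v hvA i b c hvb hvc).mpr hbc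
  -- a neighbour x of b other than v
  have hcardb : 1 ≤ ((G.neighborFinset b).erase v).card := by
    have := hmindeg b
    rw [← G.card_neighborFinset_eq_degree] at this
    calc 1 ≤ (G.neighborFinset b).card - 1 := by omega
    _ ≤ ((G.neighborFinset b).erase v).card := by
        rw [Finset.card_erase_eq_ite]; split <;> omega
  obtain ⟨x, hx⟩ := Finset.card_pos.mp hcardb
  obtain ⟨hxv, hxb⟩ := Finset.mem_erase.mp hx
  rw [SimpleGraph.mem_neighborFinset] at hxb
  have hxA : x ∈ A := by
    rcases hbip b x hxb with ⟨h, _⟩ | ⟨_, h⟩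
    · exact absurd hbB (hAB h)
    · exact h
  -- inequalities
  have hix : ∀ i, f i x < f i b := fun i => hcons x b hxb.symm hxA hbB i
  have hivb : ∀ i, f i v < f i b := fun i => hcons v b hvb hvA hbB i
  -- edges v-c and b-x are disjoint
  have hvB : v ∉ B := hAB hvA
  have hvnb : v ≠ b := fun h => hvB (h ▸ hbB)
  have hcnb : c ≠ b := fun h => (lt_irrefl _ (h ▸ hbc)).elim
  have hcnx : c ≠ x := fun h => hAB (h ▸ hxA) hcB
  obtain ⟨i, hsep⟩ := hrep.2 hvc hxb.symm hxv.symm hvnb hcnx hcnb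
  rcases hsep with ⟨_, _, _, h4⟩ | ⟨_, _, h3, _⟩
  · exact absurd (hibc i) (not_lt.mpr (le_of_lt h4))
  · exact absurd (hivb i) (not_lt.mpr (le_of_lt h3))
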